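/- Let C be a Z2Z4-additive ACD code such that Φ(C) and Φ(C⊥) are both linear. Then for all u ∈ C and v ∈ C⊥, Φ(u+v) = Φ(u) + Φ(v). -/

import Mathlib

open Finset

/-- The ambient mixed alphabet space `Z2^α × Z4^β`. -/
abbrev Amb (α β : ℕ) := (Fin α → ZMod 2) × (Fin β → ZMod 4)

/-- The binary space `Z2^{α+2β}`, represented as `Z2^α × Z2^β × Z2^β`
(binary part, first Gray bits, second Gray bits). -/
abbrev Bin (α β : ℕ) := (Fin α → ZMod 2) × (Fin β → ZMod 2) × (Fin β → ZMod 2)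

/-- The `Z4`-valued inner product `[u,v] = 2·Σ u_i v_i + Σ u'_j v'_j`. -/
def zinner {α β : ℕ} (u v : Amb α β) : ZMod 4 :=
  2 * ∑ i, ((u.1 i).val : ZMod 4) * ((v.1 i).val : ZMod 4) + ∑ j, u.2 j * v.2 j

/-- The dual of a subset of the mixed ambient space. -/
def zdual {α β : ℕ} (C : Set (Amb α β)) : Set (Amb α β) :=
  {v | ∀ u ∈ C, zinner u v = 0}

/-- The vector `2u*v = (0 | 2u'*v')` (componentwise product; doubling kills the binary part). -/
def star2 {α β : ℕ} (u v : Amb α β) : Amb α β :=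
  (0, fun j => 2 * u.2 j * v.2 j)

/-- The usual Gray map `Z4 → Z2²`. -/
def gray (x : ZMod 4) : ZMod 2 × ZMod 2 :=
  match x.val with
  | 0 => (0, 0)
  | 1 => (0, 1)
  | 2 => (1, 1)
  | _ => (1, 0)

/-- The extended Gray map `Φ : Z2^α × Z4^β → Z2^{α+2β}`. -/
def Phi {α β : ℕ} (u : Amb α β) : Bin α β :=
  (u.1, fun j => (gray (u.2 j)).1, fun j => (gray (u.2 j)).2)

/-- The standard binary inner product on `Z2^{α+2β}`. -/
def binner {α β : ℕ} (x y : Bin α β) : ZMod 2 :=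
  ∑ i, x.1 i * y.1 i + ∑ j, x.2.1 j * y.2.1 j + ∑ j, x.2.2 j * y.2.2 j

/-- The dual of a subset of `Z2^{α+2β}`. -/
def bdual {α β : ℕ} (S : Set (Bin α β)) : Set (Bin α β) :=
  {y | ∀ x ∈ S, binner x y = 0}

/-- A subset of `Z2^{α+2β}` is a linear binary code if it is a linear subspace. -/
def IsLinear {α β : ℕ} (S : Set (Bin α β)) : Prop :=
  ∃ M : Submodule (ZMod 2) (Bin α β), ↑M = S

/-- The set `D_C = {2u*v : u ∈ C, v ∈ C⊥}`. -/
def DC {α β : ℕ} (C : Set (Amb α β)) : Set (Amb α β) :=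
  {x | ∃ u ∈ C, ∃ v ∈ zdual C, x = star2 u v}

/-- The standard binary inner product on `Z2^n`. -/
def binner2 {n : ℕ} (u v : Fin n → ZMod 2) : ZMod 2 := ∑ i, u i * v i

/-- The dual of a subset of `Z2^n`. -/
def bdual2 {n : ℕ} (C : Set (Fin n → ZMod 2)) : Set (Fin n → ZMod 2) :=
  {v | ∀ u ∈ C, binner2 u v = 0}

open Finset

def g2 (x : ZMod 2) : ZMod 4 := 2 * (x.val : ZMod 4)

lemma g2_mul : ∀ x y : ZMod 2,
    (2 : ZMod 4) * ((x.val : ZMod 4) * (y.val : ZMod 4)) = g2 (x * y) := by decide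

lemma g2_add : ∀ x y : ZMod 2, g2 (x + y) = g2 x + g2 y := by decide

lemma g2_zero : g2 0 = 0 := by decide

lemma g2_neg : ∀ x : ZMod 2, g2 (-x) = - g2 x := by decide

lemma zinner_eq {α β : ℕ} (u v : Amb α β) :
    zinner u v = ∑ i, g2 (u.1 i * v.1 i) + ∑ j, u.2 j * v.2 j := by
  unfold zinner
  rw [Finset.mul_sum]
  congr 1
  exact Finset.sum_congr rfl fun i _ => by rw [g2_mul]

lemma zinner_comm {α β : ℕ} (u v : Amb α β) : zinner u v = zinner v u := by
  simp only [zinner_eq]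
  congr 1
  · exact Finset.sum_congr rfl fun i _ => by rw [mul_comm]
  · exact Finset.sum_congr rfl fun j _ => by rw [mul_comm]

lemma zinner_add_left {α β : ℕ} (u u' v : Amb α β) :
    zinner (u + u') v = zinner u v + zinner u' v := by
  simp only [zinner_eq, Prod.fst_add, Prod.snd_add, Pi.add_apply, add_mul, g2_add,
    Finset.sum_add_distrib]
  ring

lemma zinner_add_right {α β : ℕ} (u v v' : Amb α β) :
    zinner u (v + v') = zinner u v + zinner u v' := by
  rw [zinner_comm, zinner_add_left, zinner_comm v u, zinner_comm v' u]

lemma zinner_neg_left {α β : ℕ} (u v : Amb α β) : zinner (-u) v = - zinner u v := by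
  simp only [zinner_eq, Prod.fst_neg, Prod.snd_neg, Pi.neg_apply, neg_mul, g2_neg,
    Finset.sum_neg_distrib, neg_add]

lemma zinner_zero_left {α β : ℕ} (v : Amb α β) : zinner 0 v = 0 := by
  simp [zinner_eq, g2_zero]

lemma zinner_zero_right {α β : ℕ} (v : Amb α β) : zinner v 0 = 0 := by
  rw [zinner_comm, zinner_zero_left]

lemma zinner_neg_right {α β : ℕ} (u v : Amb α β) : zinner u (-v) = - zinner u v := by
  rw [zinner_comm, zinner_neg_left, zinner_comm]
lemma gray_key : ∀ a b : ZMod 4, gray (a + b + 2 * a * b) = gray a + gray b := by decide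

lemma gray_inj : ∀ a b : ZMod 4, gray a = gray b → a = b := by decide

lemma Phi_key {α β : ℕ} (u v : Amb α β) :
    Phi (u + v + star2 u v) = Phi u + Phi v := by
  unfold Phi star2
  refine Prod.ext ?_ (Prod.ext ?_ ?_)
  · show (u.1 + v.1 + 0) = u.1 + v.1
    simp
  · funext j
    show (gray (u.2 j + v.2 j + 2 * u.2 j * v.2 j)).1 = (gray (u.2 j)).1 + (gray (v.2 j)).1
    rw [gray_key]; rfl
  · funext j
    show (gray (u.2 j + v.2 j + 2 * u.2 j * v.2 j)).2 = (gray (u.2 j)).2 + (gray (v.2 j)).2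
    rw [gray_key]; rfl

lemma Phi_inj {α β : ℕ} : Function.Injective (Phi (α := α) (β := β)) := by
  intro u v h
  have h1 : u.1 = v.1 := congrArg (fun x : Bin α β => x.1) h
  have h2 : ∀ j, gray (u.2 j) = gray (v.2 j) := by
    intro j
    have ha := congrFun (congrArg (fun x : Bin α β => x.2.1) h) j
    have hb := congrFun (congrArg (fun x : Bin α β => x.2.2) h) j
    exact Prod.ext ha hb
  exact Prod.ext h1 (funext fun j => gray_inj _ _ (h2 j))

/-- Closure under `star2` for a set with `Φ`-linear image and closed under `c - u - v`. -/
lemma star2_mem {α β : ℕ} {S : Set (Amb α β)} (hS : ∀ {a b c}, a ∈ S → b ∈ S → c ∈ S → a - b - c ∈ S)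
    (hlin : IsLinear (Phi '' S)) {u v : Amb α β} (hu : u ∈ S) (hv : v ∈ S) :
    star2 u v ∈ S := by
  obtain ⟨M, hM⟩ := hlin
  have hu' : Phi u ∈ (M : Set (Bin α β)) := by rw [hM]; exact Set.mem_image_of_mem _ hu
  have hv' : Phi v ∈ (M : Set (Bin α β)) := by rw [hM]; exact Set.mem_image_of_mem _ hv
  have hsum : Phi u + Phi v ∈ (M : Set (Bin α β)) := M.add_mem hu' hv'
  rw [hM] at hsum
  obtain ⟨c, hc, hPhi⟩ := hsum
  have hce : c = u + v + star2 u v := Phi_inj (hPhi.trans (Phi_key u v).symm)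
  have : star2 u v = c - u - v := by rw [hce]; abel
  rw [this]
  exact hS hc hu hv

lemma zdual_sub3 {α β : ℕ} (C : Set (Amb α β)) {a b c : Amb α β}
    (ha : a ∈ zdual C) (hb : b ∈ zdual C) (hc : c ∈ zdual C) : a - b - c ∈ zdual C := by
  intro u hu
  have h1 := ha u hu; have h2 := hb u hu; have h3 := hc u hu
  simp only [sub_eq_add_neg, zinner_add_right, zinner_neg_right, h1, h2, h3]
  ring

lemma sub3_mem {α β : ℕ} (C : AddSubgroup (Amb α β)) {a b c : Amb α β}
    (ha : a ∈ C) (hb : b ∈ C) (hc : c ∈ C) : a - b - c ∈ C :=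
  C.sub_mem (C.sub_mem ha hb) hc
lemma zinner_star2_right {α β : ℕ} (w u v : Amb α β) :
    zinner w (star2 u v) = zinner (star2 u w) v := by
  unfold zinner star2
  simp only [Prod.fst, Prod.snd]
  rw [show ((0 : Fin α → ZMod 2)) = (fun _ => 0) from rfl]
  simp only [ZMod.val_zero, Nat.cast_zero, mul_zero, zero_mul, Finset.sum_const_zero, zero_add,
    add_zero]
  exact Finset.sum_congr rfl fun j _ => by ring

/-- x = star2 u v is in the dual of C. -/
lemma star2_mem_zdual {α β : ℕ} (C : AddSubgroup (Amb α β))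
    (h1 : IsLinear (Phi '' (C : Set (Amb α β)))) {u v : Amb α β}
    (hu : u ∈ C) (hv : v ∈ zdual (C : Set (Amb α β))) :
    star2 u v ∈ zdual (C : Set (Amb α β)) := by
  intro w hw
  rw [zinner_star2_right]
  exact hv _ (star2_mem (fun ha hb hc => sub3_mem C ha hb hc) h1 hu hw)

/-- x = star2 u v is in the double dual of C. -/
lemma star2_mem_zddual {α β : ℕ} (C : AddSubgroup (Amb α β))
    (h2 : IsLinear (Phi '' zdual (C : Set (Amb α β)))) {u v : Amb α β}
    (hu : u ∈ C) (hv : v ∈ zdual (C : Set (Amb α β))) :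
    star2 u v ∈ zdual (zdual (C : Set (Amb α β))) := by
  intro w hw
  have h : zinner w (star2 u v) = zinner u (star2 v w) := by
    rw [zinner_star2_right, zinner_comm]
    unfold zinner star2
    simp only [Prod.fst, Prod.snd]
    rw [show ((0 : Fin α → ZMod 2)) = (fun _ => 0) from rfl]
    simp only [ZMod.val_zero, Nat.cast_zero, mul_zero, zero_mul, Finset.sum_const_zero, zero_add,
      add_zero]
    exact Finset.sum_congr rfl fun j _ => by ring
  rw [h]
  have hmem : star2 v w ∈ zdual (C : Set (Amb α β)) :=
    star2_mem (fun ha hb hc => zdual_sub3 _ ha hb hc) h2 hv hw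
  exact hmem u hu

lemma four_zsmul {α β : ℕ} (x : Amb α β) : (4 : ℤ) • x = 0 := by
  refine Prod.ext (funext fun i => ?_) (funext fun j => ?_)
  · show (4 : ℤ) • (x.1 i) = 0
    rw [zsmul_eq_mul]
    rw [show ((4 : ℤ) : ZMod 2) = 0 by decide]
    exact zero_mul _
  · show (4 : ℤ) • (x.2 j) = 0
    rw [zsmul_eq_mul]
    rw [show ((4 : ℤ) : ZMod 4) = 0 by decide]
    exact zero_mul _

lemma odd_zsmul_mem {α β : ℕ} (C : AddSubgroup (Amb α β)) {x : Amb α β} {m : ℤ}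
    (hodd : m % 2 = 1) (hm : m • x ∈ C) : x ∈ C := by
  obtain ⟨l, hl⟩ : ∃ l, m = 2 * l + 1 := ⟨m / 2, by omega⟩
  have hx : x = m • (m • x) := by
    rw [← mul_smul]
    have : m * m = 4 * (l * l + l) + 1 := by rw [hl]; ring
    rw [this, add_zsmul, mul_zsmul, four_zsmul]; simp
  rw [hx]
  exact C.zsmul_mem hm m
lemma exists_c_of_dvd : ∀ k : ℕ, k ∣ 4 → ∀ y : ZMod 4, (4 / k) • y = 0 → ∃ c : ZMod 4, k • c = y := by
  intro k hk
  have hk4 : k ≤ 4 := Nat.le_of_dvd (by norm_num) hk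
  interval_cases k
  · norm_num at hk
  · decide
  · decide
  · norm_num at hk
  · decide

lemma exists_c {α β : ℕ} (H : AddSubgroup (Amb α β)) (f : H →+ ZMod 4) (a : Amb α β) :
    ∃ c : ZMod 4, ∀ (n : ℤ) (hm : n • a ∈ H), f ⟨n • a, hm⟩ = n • c := by
  classical
  have h4 : ((4 : ℕ) : ℤ) • a ∈ H := by
    rw [show ((4 : ℕ) : ℤ) = (4 : ℤ) from rfl, four_zsmul]; exact H.zero_mem
  have hex : ∃ k : ℕ, 0 < k ∧ (k : ℤ) • a ∈ H := ⟨4, by norm_num, h4⟩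
  set k := Nat.find hex with hkdef
  obtain ⟨hkpos, hkmem⟩ := Nat.find_spec hex
  have hdvd : ∀ n : ℤ, n • a ∈ H → (k : ℤ) ∣ n := by
    intro n hn
    by_contra hnd
    have hkne : (k : ℤ) ≠ 0 := by exact_mod_cast hkpos.ne'
    have hr0 : 0 ≤ n % (k : ℤ) := Int.emod_nonneg n hkne
    have hrk : n % (k : ℤ) < k := Int.emod_lt_of_pos n (by exact_mod_cast hkpos)
    have hrmem : (n % (k : ℤ)) • a ∈ H := by
      have heq : n % (k : ℤ) = n - (n / (k : ℤ)) * (k : ℤ) := by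
        rw [Int.emod_def]; ring
      rw [heq, sub_smul, mul_smul]
      exact H.sub_mem hn (H.zsmul_mem hkmem _)
    have hrne : n % (k : ℤ) ≠ 0 := fun h => hnd (Int.dvd_of_emod_eq_zero h)
    have hlt : (n % (k : ℤ)).toNat < k := by omega
    refine Nat.find_min hex hlt ⟨by omega, ?_⟩
    have : (((n % (k : ℤ)).toNat : ℤ)) = n % (k : ℤ) := by omega
    rw [this]; exact hrmem
  have hk4 : k ∣ 4 := by
    have := hdvd ((4 : ℕ) : ℤ) h4
    exact_mod_cast this
  set y := f ⟨(k : ℤ) • a, hkmem⟩ with hy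
  have hzero : ((4 / k : ℕ)) • y = 0 := by
    have hsub : ((4 / k : ℕ)) • (⟨(k : ℤ) • a, hkmem⟩ : H) = 0 := by
      apply Subtype.ext
      show ((4 / k : ℕ)) • ((k : ℤ) • a) = (0 : Amb α β)
      rw [(natCast_zsmul ((k:ℤ) • a) ((4 / k : ℕ))).symm]
      rw [← mul_smul]
      have : ((4 / k : ℕ) : ℤ) * (k : ℤ) = (4 : ℤ) := by
        have := Nat.div_mul_cancel hk4
        exact_mod_cast this
      rw [this, four_zsmul]
    rw [hy, ← map_nsmul, hsub, map_zero]
  obtain ⟨c, hc⟩ := exists_c_of_dvd k hk4 y hzero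
  refine ⟨c, fun n hn => ?_⟩
  obtain ⟨m, hmk⟩ := hdvd n hn
  have hsub : (⟨n • a, hn⟩ : H) = m • (⟨(k : ℤ) • a, hkmem⟩ : H) := by
    apply Subtype.ext
    show n • a = m • ((k : ℤ) • a)
    rw [← mul_smul, mul_comm, ← hmk]
  rw [hsub, map_zsmul, ← hy, ← hc]
  rw [← natCast_zsmul c k, ← mul_smul, mul_comm, ← hmk]
lemma step {α β : ℕ} (H : AddSubgroup (Amb α β)) (f : H →+ ZMod 4) (a : Amb α β) (c : ZMod 4)
    (hc : ∀ (n : ℤ) (hm : n • a ∈ H), f ⟨n • a, hm⟩ = n • c) :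
    ∃ (K : AddSubgroup (Amb α β)) (g : K →+ ZMod 4) (hHK : H ≤ K) (haK : a ∈ K),
      (∀ h (hh : h ∈ H), g ⟨h, hHK hh⟩ = f ⟨h, hh⟩) ∧ g ⟨a, haK⟩ = c := by
  classical
  let τ : (H × ℤ) →+ Amb α β :=
    (H.subtype.comp (AddMonoidHom.fst _ _)) +
      ((zmultiplesHom (Amb α β) a).comp (AddMonoidHom.snd _ _))
  have hτ : ∀ p : H × ℤ, τ p = (p.1 : Amb α β) + p.2 • a := fun p => rfl
  let σ : (H × ℤ) →+ ZMod 4 :=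
    (f.comp (AddMonoidHom.fst _ _)) + ((zmultiplesHom (ZMod 4) c).comp (AddMonoidHom.snd _ _))
  have hσ : ∀ p : H × ℤ, σ p = f p.1 + p.2 • c := fun p => rfl
  have hker : ∀ p ∈ τ.ker, σ p = 0 := by
    intro p hp
    have hp' : (p.1 : Amb α β) + p.2 • a = 0 := by
      rw [← hτ p]; exact hp
    have hval : (-p.2) • a = (p.1 : Amb α β) := by
      rw [neg_smul, neg_eq_iff_add_eq_zero, add_comm]; exact hp'
    have hmem : (-p.2) • a ∈ H := by rw [hval]; exact p.1.2
    have hfeq := hc (-p.2) hmem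
    have hfst : (⟨(-p.2) • a, hmem⟩ : H) = p.1 := Subtype.ext hval
    rw [hfst] at hfeq
    rw [hσ, hfeq, neg_smul, neg_add_cancel]
  let e := QuotientAddGroup.quotientKerEquivRange τ
  let Q : (H × ℤ) ⧸ τ.ker →+ ZMod 4 := QuotientAddGroup.lift τ.ker σ hker
  let g : τ.range →+ ZMod 4 := Q.comp e.symm.toAddMonoidHom
  have hg : ∀ (p : H × ℤ) (hp : τ p ∈ τ.range), g ⟨τ p, hp⟩ = σ p := by
    intro p hp
    have h1 : e.symm ⟨τ p, hp⟩ = QuotientAddGroup.mk p := by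
      rw [AddEquiv.symm_apply_eq]
      rfl
    show Q (e.symm ⟨τ p, hp⟩) = σ p
    rw [h1]
    rfl
  have hHK : H ≤ τ.range := by
    intro h hh
    refine ⟨(⟨h, hh⟩, 0), ?_⟩
    rw [hτ]; simp
  have haK : a ∈ τ.range := by
    refine ⟨(0, 1), ?_⟩
    rw [hτ]; simp
  refine ⟨τ.range, g, hHK, haK, ?_, ?_⟩
  · intro h hh
    have hmem : τ (⟨h, hh⟩, 0) ∈ τ.range := ⟨_, rfl⟩
    have heq : (⟨h, hHK hh⟩ : τ.range) = ⟨τ (⟨h, hh⟩, 0), hmem⟩ := by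
      apply Subtype.ext
      show h = τ (⟨h, hh⟩, 0)
      rw [hτ]; simp
    rw [heq, hg]
    rw [hσ]; simp
  · have hmem : τ ((0 : H), 1) ∈ τ.range := ⟨_, rfl⟩
    have heq : (⟨a, haK⟩ : τ.range) = ⟨τ ((0 : H), 1), hmem⟩ := by
      apply Subtype.ext
      show a = τ ((0 : H), 1)
      rw [hτ]; simp
    rw [heq, hg]
    rw [hσ]; simp
lemma top_hom {α β : ℕ} (H : AddSubgroup (Amb α β)) (htop : H = ⊤) (f : H →+ ZMod 4) :
    ∃ g : Amb α β →+ ZMod 4, ∀ h (hh : h ∈ H), g h = f ⟨h, hh⟩ := by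
  subst htop
  refine ⟨f.comp ((AddSubgroup.topEquiv : ((⊤ : AddSubgroup (Amb α β)) ≃+ Amb α β)).symm.toAddMonoidHom), fun h hh => rfl⟩

lemma extend_hom {α β : ℕ} : ∀ (n : ℕ) (H : AddSubgroup (Amb α β)),
    Nat.card (Amb α β) ≤ Nat.card H + n →
    ∀ f : H →+ ZMod 4, ∃ g : Amb α β →+ ZMod 4, ∀ h (hh : h ∈ H), g h = f ⟨h, hh⟩ := by
  intro n
  induction n with
  | zero =>
    intro H hcard f
    refine top_hom H ?_ f
    apply AddSubgroup.eq_top_of_card_eq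
    have h1 : Nat.card H ≤ Nat.card (Amb α β) :=
      Nat.card_le_card_of_injective _ Subtype.val_injective
    omega
  | succ n ih =>
    intro H hcard f
    by_cases htop : H = ⊤
    · exact top_hom H htop f
    · have hex : ∃ a, a ∉ H := by
        by_contra hall
        push_neg at hall
        exact htop ((AddSubgroup.eq_top_iff' H).mpr hall)
      obtain ⟨a, ha⟩ := hex
      obtain ⟨c, hc⟩ := exists_c H f a
      obtain ⟨K, g, hHK, haK, hcomp, -⟩ := step H f a c hc
      have hlt : Nat.card H < Nat.card K := by
        rw [show Nat.card H = (H : Set (Amb α β)).ncard from Nat.card_coe_set_eq _, show Nat.card K = (K : Set (Amb α β)).ncard from Nat.card_coe_set_eq _]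
        apply Set.ncard_lt_ncard
        · constructor
          · exact fun x hx => hHK hx
          · intro hsub
            exact ha (hsub haK)
        · exact Set.toFinite _
      obtain ⟨G', hG'⟩ := ih K (by omega) g
      exact ⟨G', fun h hh => (hG' h (hHK hh)).trans (hcomp h hh)⟩
lemma g2_eq_zero : ∀ t : ZMod 2, g2 t = 0 → t = 0 := by decide

lemma zinner_single_fst {α β : ℕ} (i : Fin α) (x : Amb α β) :
    zinner ((Pi.single i 1 : Fin α → ZMod 2), 0) x = g2 (x.1 i) := by
  rw [zinner_eq]
  have h1 : ∀ i' : Fin α, g2 ((Pi.single i 1 : Fin α → ZMod 2) i' * x.1 i')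
      = if i' = i then g2 (x.1 i') else 0 := by
    intro i'
    rw [Pi.single_apply]
    by_cases h : i' = i <;> simp [h, g2_zero]
  calc (∑ i', g2 ((Pi.single i 1 : Fin α → ZMod 2) i' * x.1 i')) + ∑ j, (0 : ZMod 4) * x.2 j
      = ∑ i', if i' = i then g2 (x.1 i') else 0 := by
        rw [Finset.sum_congr rfl fun i' _ => h1 i']
        simp
    _ = g2 (x.1 i) := by rw [Finset.sum_ite_eq' Finset.univ i]; simp

lemma zinner_single_snd {α β : ℕ} (j : Fin β) (x : Amb α β) :
    zinner ((0 : Fin α → ZMod 2), (Pi.single j 1 : Fin β → ZMod 4)) x = x.2 j := by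
  rw [zinner_eq]
  have h1 : ∀ j' : Fin β, (Pi.single j 1 : Fin β → ZMod 4) j' * x.2 j'
      = if j' = j then x.2 j' else 0 := by
    intro j'
    rw [Pi.single_apply]
    by_cases h : j' = j <;> simp [h]
  calc (∑ i, g2 ((0 : ZMod 2) * x.1 i)) + ∑ j', (Pi.single j 1 : Fin β → ZMod 4) j' * x.2 j'
      = ∑ j', if j' = j then x.2 j' else 0 := by
        rw [Finset.sum_congr rfl fun j' _ => h1 j']
        simp [g2_zero]
    _ = x.2 j := by rw [Finset.sum_ite_eq' Finset.univ j]; simp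

lemma zinner_nondeg {α β : ℕ} (x : Amb α β) (h : ∀ u, zinner u x = 0) : x = 0 := by
  refine Prod.ext (funext fun i => ?_) (funext fun j => ?_)
  · have := h ((Pi.single i 1 : Fin α → ZMod 2), 0)
    rw [zinner_single_fst] at this
    exact g2_eq_zero _ this
  · have := h ((0 : Fin α → ZMod 2), (Pi.single j 1 : Fin β → ZMod 4))
    rw [zinner_single_snd] at this
    exact this

lemma hom_eval {α β : ℕ} (f : Amb α β →+ ZMod 4) (x : Amb α β) :
    f x = ∑ i, (x.1 i).val • f ((Pi.single i 1 : Fin α → ZMod 2), 0)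
        + ∑ j, (x.2 j).val • f ((0 : Fin α → ZMod 2), (Pi.single j 1 : Fin β → ZMod 4)) := by
  have hx : x = (∑ i, (((Pi.single i (x.1 i) : Fin α → ZMod 2), (0 : Fin β → ZMod 4)) : Amb α β))
      + ∑ j, (((0 : Fin α → ZMod 2), (Pi.single j (x.2 j) : Fin β → ZMod 4)) : Amb α β) := by
    refine Prod.ext ?_ ?_
    · rw [Prod.fst_add, Prod.fst_sum, Prod.fst_sum]
      simp [Finset.univ_sum_single]
    · rw [Prod.snd_add, Prod.snd_sum, Prod.snd_sum]
      simp [Finset.univ_sum_single]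
  have h1 : ∀ i, (((Pi.single i (x.1 i) : Fin α → ZMod 2), (0 : Fin β → ZMod 4)) : Amb α β)
      = (x.1 i).val • (((Pi.single i 1 : Fin α → ZMod 2), (0 : Fin β → ZMod 4)) : Amb α β) := by
    intro i
    refine Prod.ext ?_ ?_
    · show Pi.single i (x.1 i) = (x.1 i).val • (Pi.single i 1 : Fin α → ZMod 2)
      rw [← Pi.single_smul]
      congr 1
      rw [nsmul_eq_mul, mul_one]
      exact (ZMod.natCast_rightInverse (x.1 i)).symm
    · show (0 : Fin β → ZMod 4) = (x.1 i).val • (0 : Fin β → ZMod 4)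
      rw [smul_zero]
  have h2 : ∀ j, (((0 : Fin α → ZMod 2), (Pi.single j (x.2 j) : Fin β → ZMod 4)) : Amb α β)
      = (x.2 j).val • (((0 : Fin α → ZMod 2), (Pi.single j 1 : Fin β → ZMod 4)) : Amb α β) := by
    intro j
    refine Prod.ext ?_ ?_
    · show (0 : Fin α → ZMod 2) = (x.2 j).val • (0 : Fin α → ZMod 2)
      rw [smul_zero]
    · show Pi.single j (x.2 j) = (x.2 j).val • (Pi.single j 1 : Fin β → ZMod 4)
      rw [← Pi.single_smul]
      congr 1
      rw [nsmul_eq_mul, mul_one]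
      exact (ZMod.natCast_rightInverse (x.2 j)).symm
  conv_lhs => rw [hx]
  rw [map_add, map_sum, map_sum]
  congr 1
  · exact Finset.sum_congr rfl fun i _ => by rw [h1 i, map_nsmul]
  · exact Finset.sum_congr rfl fun j _ => by rw [h2 j, map_nsmul]
def zrho {α β : ℕ} (w : Amb α β) : Amb α β →+ ZMod 4 where
  toFun u := zinner u w
  map_zero' := zinner_zero_left w
  map_add' a b := zinner_add_left a b w

lemma zrho_inj {α β : ℕ} : Function.Injective (zrho (α := α) (β := β)) := by
  intro w w' h
  have h' : ∀ u, zinner u w = zinner u w' := fun u => congrFun (congrArg DFunLike.coe h) u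
  have hsub : ∀ u, zinner u (w - w') = 0 := by
    intro u
    rw [sub_eq_add_neg, zinner_add_right, zinner_neg_right, h', add_neg_cancel]
  have := zinner_nondeg _ hsub
  rwa [sub_eq_zero] at this

instance homFinite {α β : ℕ} : Finite (Amb α β →+ ZMod 4) :=
  Finite.of_injective (fun f => (f : Amb α β → ZMod 4)) DFunLike.coe_injective

lemma card_hom_le {α β : ℕ} :
    Nat.card (Amb α β →+ ZMod 4) ≤ Nat.card (Amb α β) := by
  classical
  set T := (Fin α → {y : ZMod 4 // 2 * y = 0}) × (Fin β → ZMod 4) with hT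
  have hJ : ∃ J : (Amb α β →+ ZMod 4) → T, Function.Injective J := by
    refine ⟨fun f => (fun i => ⟨f ((Pi.single i 1 : Fin α → ZMod 2), 0), ?_⟩,
      fun j => f ((0 : Fin α → ZMod 2), (Pi.single j 1 : Fin β → ZMod 4))), ?_⟩
    · have he : (((Pi.single i 1 : Fin α → ZMod 2), (0 : Fin β → ZMod 4)) : Amb α β)
          + ((Pi.single i 1 : Fin α → ZMod 2), (0 : Fin β → ZMod 4)) = 0 := by
        refine Prod.ext ?_ ?_
        · show Pi.single i 1 + Pi.single i 1 = 0
          rw [← Pi.single_add]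
          have : (1 : ZMod 2) + 1 = 0 := by decide
          rw [this, Pi.single_zero]
        · show (0 : Fin β → ZMod 4) + 0 = 0
          rw [add_zero]
      rw [two_mul, ← map_add, he, map_zero]
    · intro f f' h
      have h1 := congrArg Prod.fst h
      have h2 := congrArg Prod.snd h
      ext x
      rw [hom_eval f x, hom_eval f' x]
      congr 1
      · refine Finset.sum_congr rfl fun i _ => ?_
        exact congrArg (fun z => (x.1 i).val • z) (congrArg Subtype.val (congrFun h1 i))
      · refine Finset.sum_congr rfl fun j _ => ?_
        exact congrArg (fun z => (x.2 j).val • z) (congrFun h2 j)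
  obtain ⟨J, hJinj⟩ := hJ
  have hle : Nat.card (Amb α β →+ ZMod 4) ≤ Nat.card T :=
    Nat.card_le_card_of_injective J hJinj
  have hcardT : Nat.card T = Nat.card (Amb α β) := by
    have hsub : Fintype.card {y : ZMod 4 // 2 * y = 0} = 2 := by decide
    simp [hT, Nat.card_eq_fintype_card, Fintype.card_fun, hsub, ZMod.card]
  omega

lemma zrho_surj {α β : ℕ} : Function.Surjective (zrho (α := α) (β := β)) := by
  have hbij : Function.Bijective (zrho (α := α) (β := β)) := by
    rw [Nat.bijective_iff_injective_and_card]
    refine ⟨zrho_inj, ?_⟩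
    have h1 : Nat.card (Amb α β) ≤ Nat.card (Amb α β →+ ZMod 4) :=
      Nat.card_le_card_of_injective _ zrho_inj
    have h2 := card_hom_le (α := α) (β := β)
    omega
  exact hbij.2

lemma zinner_repr {α β : ℕ} (χ : Amb α β →+ ZMod 4) : ∃ w, ∀ u, χ u = zinner u w := by
  obtain ⟨w, hw⟩ := zrho_surj χ
  exact ⟨w, fun u => by rw [← hw]; rfl⟩
/-- If `C` is ACD and `Φ(C)`, `Φ(C⊥)` are linear, then
`Φ(u+v) = Φ(u) + Φ(v)` for `u ∈ C`, `v ∈ C⊥`. -/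
theorem stmt14 {α β : ℕ} (C : AddSubgroup (Amb α β))
    (hACD : ∀ x ∈ C, x ∈ zdual (C : Set (Amb α β)) → x = 0)
    (h1 : IsLinear (Phi '' (C : Set (Amb α β))))
    (h2 : IsLinear (Phi '' zdual (C : Set (Amb α β)))) :
    ∀ u ∈ C, ∀ v ∈ zdual (C : Set (Amb α β)), Phi (u + v) = Phi u + Phi v := by
  intro u hu v hv
  set x := star2 u v with hx
  have hxK : x ∈ zdual (C : Set (Amb α β)) := star2_mem_zdual C h1 hu hv
  have hxKK : x ∈ zdual (zdual (C : Set (Amb α β))) := star2_mem_zddual C h2 hu hv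
  have hxC : x ∈ C := by
    by_contra hxc
    have hc0 : ∀ (n : ℤ) (hm : n • x ∈ C), (0 : C →+ ZMod 4) ⟨n • x, hm⟩ = n • (2 : ZMod 4) := by
      intro n hn
      have heven : n % 2 = 0 := by
        by_contra hodd
        have h1' : n % 2 = 1 := by omega
        exact hxc (odd_zsmul_mem C h1' hn)
      obtain ⟨m, hm2⟩ : ∃ m, n = m * 2 := ⟨n / 2, by omega⟩
      show (0 : ZMod 4) = n • (2 : ZMod 4)
      have h22 : (2 : ℤ) • (2 : ZMod 4) = 0 := by
        rw [zsmul_eq_mul]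
        decide
      rw [hm2, mul_smul, h22, smul_zero]
    obtain ⟨K, g, hCK, hxK', hcomp, hgx⟩ := step C (0 : C →+ ZMod 4) x 2 hc0
    obtain ⟨χ, hχ⟩ := extend_hom (Nat.card (Amb α β)) K
      (Nat.le_add_left _ _) g
    obtain ⟨w, hw⟩ := zinner_repr χ
    have hwC : w ∈ zdual (C : Set (Amb α β)) := by
      intro u' hu'
      rw [← hw u', hχ u' (hCK hu'), hcomp u' hu']
      rfl
    have hzero := hxKK w hwC
    have h2' : zinner w x = 2 := by
      rw [zinner_comm, ← hw x, hχ x hxK', hgx]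
    rw [h2'] at hzero
    exact absurd hzero (by decide)
  have hx0 : x = 0 := hACD x hxC hxK
  have hkey := Phi_key u v
  rw [← hx, hx0, add_zero] at hkey
  exact hkey
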